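/- Let c ∈ F_q^n be nonzero with b-shape (N_0, N_1, ..., N_{l+1}), with n_i = |N_i| and t = n_0 + n_{l+1}. If t ≤ b-2 and l ≥ 3 (l odd), then wt_b(c) = t + Σ_{i=1}^{(l+1)/2} n_{2i-1} + (l-1)(b-1)/2. -/

import Mathlib

/-- The cyclic `b`-weight of `x : ZMod n → F`. -/
noncomputable def wtb {F : Type*} [Zero F] {n : ℕ} (b : ℕ) (x : ZMod n → F) : ℕ :=
  Nat.card {i : ZMod n // ∃ j < b, x (i + (j : ZMod n)) ≠ 0}

/-- Partial sums of block sizes: `blockSum nsize i = n_0 + ⋯ + n_{i-1}`. -/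
def blockSum (nsize : ℕ → ℕ) (i : ℕ) : ℕ := ∑ j ∈ Finset.range i, nsize j

/-- `c` has `b`-shape `(N_0, N_1, …, N_{l+1})`, where block `N_i` consists of the
(0-indexed) positions `[S i, S (i+1))` with `S = blockSum nsize`:
* the block sizes sum to `n`, and the internal blocks are nonempty;
* all coordinates of `c` in the leading block `N_0` and the trailing block
  `N_{l+1}` are zero;
* each odd-indexed block `N_i` (`1 ≤ i ≤ l`) starts and ends with a nonzero
  coordinate and its non-cyclic `(b-1)`-weight equals its length `n_i`, i.e.
  every position in the block has a nonzero coordinate within its window of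
  length `b-1` truncated at the end of the block;
* each even-indexed block `N_i` (`1 ≤ i ≤ l`) is a zero run of length `≥ b-1`. -/
def HasBShape {F : Type*} [Zero F] {n : ℕ} (b l : ℕ) (nsize : ℕ → ℕ)
    (c : ZMod n → F) : Prop :=
  blockSum nsize (l + 2) = n ∧
  (∀ i, 1 ≤ i → i ≤ l → 1 ≤ nsize i) ∧
  (∀ p, p < nsize 0 → c (p : ZMod n) = 0) ∧
  (∀ p, blockSum nsize (l + 1) ≤ p → p < n → c (p : ZMod n) = 0) ∧
  (∀ i, 1 ≤ i → i ≤ l → Odd i →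
    c ((blockSum nsize i : ℕ) : ZMod n) ≠ 0 ∧
    c ((blockSum nsize (i + 1) - 1 : ℕ) : ZMod n) ≠ 0 ∧
    (∀ p, blockSum nsize i ≤ p → p < blockSum nsize (i + 1) →
      ∃ j < b - 1, p + j < blockSum nsize (i + 1) ∧ c ((p + j : ℕ) : ZMod n) ≠ 0)) ∧
  (∀ i, 1 ≤ i → i ≤ l → Even i →
    b - 1 ≤ nsize i ∧
    ∀ p, blockSum nsize i ≤ p → p < blockSum nsize (i + 1) → c ((p : ℕ) : ZMod n) = 0)

lemma blockSum_succ' (nsize : ℕ → ℕ) (i : ℕ) :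
    blockSum nsize (i + 1) = blockSum nsize i + nsize i :=
  Finset.sum_range_succ _ _

lemma blockSum_mono' (nsize : ℕ → ℕ) {i j : ℕ} (h : i ≤ j) :
    blockSum nsize i ≤ blockSum nsize j :=
  Finset.sum_le_sum_of_subset (Finset.range_subset_range.2 h)

lemma findBlock' (S : ℕ → ℕ) :
    ∀ M p, p < S M → S 0 = 0 → ∃ i < M, S i ≤ p ∧ p < S (i + 1) := by
  intro M
  induction M with
  | zero => intro p hp h0; omega
  | succ M ih =>
    intro p hp h0
    by_cases h : S M ≤ p
    · exact ⟨M, Nat.lt_succ_self M, h, hp⟩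
    · obtain ⟨i, hi, h1, h2⟩ := ih p (by omega) h0
      exact ⟨i, by omega, h1, h2⟩

lemma sum_split' (f : ℕ → ℕ) (m : ℕ) :
    ∑ j ∈ Finset.range (2 * m + 3), f j =
      f 0 + f (2 * m + 2) + (∑ k ∈ Finset.range (m + 1), f (2 * k + 1)) +
        (∑ k ∈ Finset.range m, f (2 * k + 2)) := by
  induction m with
  | zero => simp [Finset.sum_range_succ]; ring
  | succ m ih =>
    rw [show 2 * (m + 1) + 3 = (2 * m + 3) + 1 + 1 by ring, Finset.sum_range_succ,
      Finset.sum_range_succ, ih, Finset.sum_range_succ (fun k => f (2 * k + 1)) (m + 1),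
      Finset.sum_range_succ (fun k => f (2 * k + 2)) m]
    ring_nf

/-- If `t = n_0 + n_{l+1} ≤ b - 2` and `l ≥ 3` is odd, then
`wt_b(c) = t + ∑_{i=1}^{(l+1)/2} n_{2i-1} + (l-1)(b-1)/2`. -/
theorem wtb_of_bshape_case2
    {F : Type*} [Field F] {n : ℕ} [NeZero n] (b l : ℕ) (hb : 2 ≤ b)
    (nsize : ℕ → ℕ) (c : ZMod n → F) (hc : c ≠ 0)
    (hshape : HasBShape b l nsize c)
    (hl : 3 ≤ l) (hlodd : Odd l) (ht : nsize 0 + nsize (l + 1) ≤ b - 2) :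
    wtb b c = (nsize 0 + nsize (l + 1)) +
      (∑ i ∈ Finset.range ((l + 1) / 2), nsize (2 * i + 1)) +
      (l - 1) * (b - 1) / 2 := by
  classical
  obtain ⟨hsum, hpos, hlead, htrail, hodd, heven⟩ := hshape
  obtain ⟨m, hm⟩ := hlodd
  set S := blockSum nsize with hS
  have hS0 : S 0 = 0 := Finset.sum_range_zero _
  have hS1 : S 1 = nsize 0 := Finset.sum_range_one _
  have hsucc : ∀ i, S (i + 1) = S i + nsize i := blockSum_succ' nsize
  have hmono : ∀ {i j : ℕ}, i ≤ j → S i ≤ S j := fun h => blockSum_mono' nsize h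
  have hn : S (l + 2) = n := hsum
  have hstart : ∀ i, 1 ≤ i → i ≤ l → Odd i → c ((S i : ℕ) : ZMod n) ≠ 0 :=
    fun i h1 h2 h3 => (hodd i h1 h2 h3).1
  -- the set of "uncounted" positions
  set badF : Finset ℕ := (Finset.range m).biUnion
      (fun k => Finset.Ico (S (2 * k + 2)) (S (2 * k + 2 + 1) - (b - 1))) with hbadF
  have hbadmem : ∀ p, p ∈ badF ↔
      ∃ k < m, S (2 * k + 2) ≤ p ∧ p + b ≤ S (2 * k + 2 + 1) := by
    intro p
    simp only [hbadF, Finset.mem_biUnion, Finset.mem_range, Finset.mem_Ico]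
    constructor
    · rintro ⟨k, hk, h1, h2⟩; exact ⟨k, hk, h1, by omega⟩
    · rintro ⟨k, hk, h1, h2⟩; exact ⟨k, hk, h1, by omega⟩
  -- the key characterization
  have key : ∀ p, p < n → ((∃ j < b, c ((p + j : ℕ) : ZMod n) ≠ 0) ↔ p ∉ badF) := by
    intro p hp
    rw [hbadmem]
    constructor
    · rintro ⟨j, hj, hne⟩ ⟨k, hk, h1, h2⟩
      exact hne ((heven (2 * k + 2) (by omega) (by omega) ⟨k + 1, by ring⟩).2 (p + j)
        (by omega) (by omega))
    · intro hbad
      obtain ⟨i, hiM, hi1, hi2⟩ := findBlock' S (l + 2) p (by rwa [hn]) hS0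
      rcases Nat.lt_or_ge i 1 with h0 | h1
      · -- i = 0 : leading zero block, S 1 is within window
        have hi0 : i = 0 := by omega
        subst hi0
        have hi2' : p < S 1 := by simpa using hi2
        have hn0 : S 1 ≤ b - 2 := by omega
        refine ⟨S 1 - p, by omega, ?_⟩
        rw [show p + (S 1 - p) = S 1 by omega]
        exact hstart 1 le_rfl (by omega) ⟨0, by ring⟩
      rcases Nat.lt_or_ge i (l + 1) with hil | hil
      · rcases Nat.even_or_odd i with he | ho
        · -- even internal block : next odd block start is within window
          obtain ⟨r, hr⟩ := he
          have hnb : ¬ (S i ≤ p ∧ p + b ≤ S (i + 1)) := fun hx => hbad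
            ⟨r - 1, by omega, by
              rw [show 2 * (r - 1) + 2 = i by omega]
              exact hx⟩
          have h3 : S (i + 1) < p + b := by omega
          refine ⟨S (i + 1) - p, by omega, ?_⟩
          rw [show p + (S (i + 1) - p) = S (i + 1) by omega]
          exact hstart (i + 1) (by omega) (by omega) ⟨r, by omega⟩
        · -- odd block : density
          obtain ⟨j, hj, hjlt, hne⟩ := (hodd i h1 (by omega) ho).2.2 p hi1 hi2
          exact ⟨j, by omega, hne⟩
      · -- i = l + 1 : trailing zero block, wraps to S 1
        have hieq : i = l + 1 := by omega
        subst hieq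
        have hSl2 : S (l + 1 + 1) = S (l + 1) + nsize (l + 1) := hsucc (l + 1)
        have hnle : S (l + 1 + 1) = n := by rw [← hn]
        refine ⟨n - p + nsize 0, by omega, ?_⟩
        have hcst : ((p + (n - p + nsize 0) : ℕ) : ZMod n) = ((nsize 0 : ℕ) : ZMod n) := by
          rw [show p + (n - p + nsize 0) = n + nsize 0 by omega]
          push_cast [ZMod.natCast_self]
          ring
        rw [hcst, ← hS1]
        exact hstart 1 le_rfl (by omega) ⟨0, by ring⟩
  -- cast helper
  have hcast : ∀ (a : ZMod n) (j : ℕ), ((a.val + j : ℕ) : ZMod n) = a + (j : ZMod n) := by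
    intro a j
    rw [Nat.cast_add, ZMod.natCast_rightInverse a]
  -- express wtb as a concrete finset cardinality
  have hcard : wtb b c = (Finset.range n \ badF).card := by
    rw [wtb, Nat.card_eq_fintype_card, Fintype.card_subtype]
    apply Finset.card_bij (fun (a : ZMod n) _ => a.val)
    · intro a ha
      rw [Finset.mem_filter] at ha
      obtain ⟨-, j, hj, hne⟩ := ha
      rw [Finset.mem_sdiff, Finset.mem_range]
      refine ⟨ZMod.val_lt a, (key a.val (ZMod.val_lt a)).1 ⟨j, hj, ?_⟩⟩
      rw [hcast a j]
      exact hne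
    · intro a1 _ a2 _ h
      rw [← ZMod.natCast_rightInverse a1, ← ZMod.natCast_rightInverse a2, h]
    · intro p hp
      rw [Finset.mem_sdiff, Finset.mem_range] at hp
      refine ⟨(p : ZMod n), ?_, ZMod.val_cast_of_lt hp.1⟩
      rw [Finset.mem_filter]
      refine ⟨Finset.mem_univ _, ?_⟩
      obtain ⟨j, hj, hne⟩ := (key p hp.1).2 hp.2
      refine ⟨j, hj, ?_⟩
      rw [← hcast (p : ZMod n) j, ZMod.val_cast_of_lt hp.1]
      exact hne
  have hsub : badF ⊆ Finset.range n := by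
    intro p hp
    rw [hbadmem] at hp
    obtain ⟨k, hk, h1, h2⟩ := hp
    have := hmono (show 2 * k + 2 + 1 ≤ l + 2 by omega)
    rw [Finset.mem_range]; omega
  have hdisj : ∀ x ∈ Finset.range m, ∀ y ∈ Finset.range m, x ≠ y →
      Disjoint (Finset.Ico (S (2 * x + 2)) (S (2 * x + 2 + 1) - (b - 1)))
        (Finset.Ico (S (2 * y + 2)) (S (2 * y + 2 + 1) - (b - 1))) := by
    have main : ∀ x y : ℕ, x < y →
        Disjoint (Finset.Ico (S (2 * x + 2)) (S (2 * x + 2 + 1) - (b - 1)))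
          (Finset.Ico (S (2 * y + 2)) (S (2 * y + 2 + 1) - (b - 1))) := by
      intro x y hxy
      apply Finset.disjoint_left.2
      intro a ha1 ha2
      rw [Finset.mem_Ico] at ha1 ha2
      have := hmono (show 2 * x + 2 + 1 ≤ 2 * y + 2 by omega)
      omega
    intro x _ y _ hne
    rcases Nat.lt_or_ge x y with h | h
    · exact main x y h
    · exact (main y x (by omega)).symm
  have hbadcard : badF.card = ∑ k ∈ Finset.range m, (nsize (2 * k + 2) - (b - 1)) := by
    rw [hbadF, Finset.card_biUnion hdisj]
    apply Finset.sum_congr rfl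
    intro k hk
    rw [Finset.mem_range] at hk
    rw [Nat.card_Ico]
    have h1 := hsucc (2 * k + 2)
    have h2 := (heven (2 * k + 2) (by omega) (by omega) ⟨k + 1, by ring⟩).1
    omega
  have hm' : (l + 1) / 2 = m + 1 := by omega
  have hmm : (l - 1) * (b - 1) / 2 = m * (b - 1) := by
    rw [show l - 1 = 2 * m by omega, show 2 * m * (b - 1) = 2 * (m * (b - 1)) by ring]
    exact Nat.mul_div_cancel_left _ (by norm_num)
  rw [hcard, Finset.card_sdiff_of_subset hsub, Finset.card_range, hbadcard, hm', hmm]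
  have hnval : n = nsize 0 + nsize (l + 1) + (∑ k ∈ Finset.range (m + 1), nsize (2 * k + 1)) +
      (∑ k ∈ Finset.range m, nsize (2 * k + 2)) := by
    have hsplit := sum_split' nsize m
    rw [show 2 * m + 3 = l + 2 by omega, show 2 * m + 2 = l + 1 by omega] at hsplit
    rw [← hn]
    exact hsplit
  have hsumsub : (∑ k ∈ Finset.range m, (nsize (2 * k + 2) - (b - 1))) + m * (b - 1) =
      ∑ k ∈ Finset.range m, nsize (2 * k + 2) := by
    have hconst : m * (b - 1) = ∑ _k ∈ Finset.range m, (b - 1) := by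
      rw [Finset.sum_const, Finset.card_range, smul_eq_mul]
    rw [hconst, ← Finset.sum_add_distrib]
    apply Finset.sum_congr rfl
    intro k hk
    rw [Finset.mem_range] at hk
    have h2 := (heven (2 * k + 2) (by omega) (by omega) ⟨k + 1, by ring⟩).1
    omega
  set A := ∑ k ∈ Finset.range (m + 1), nsize (2 * k + 1) with hA
  set E := ∑ k ∈ Finset.range m, (nsize (2 * k + 2) - (b - 1)) with hE
  set E' := ∑ k ∈ Finset.range m, nsize (2 * k + 2) with hE'
  set D := m * (b - 1) with hD
  omega
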